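/- Let n ≥ 1 and N = 2^n, let G_n = (X_1,…,X_N) be a Gray code of length-n binary strings, let U be an N×N complex unitary matrix, set m = N(N−1)/2, and let μ_1,…,μ_m be complex numbers of modulus 1 with μ_1 ⋯ μ_m = det(U). Then there exist unitary matrices A_1,…,A_m with U = A_1 ⋯ A_m such that each A_i agrees with the identity in every entry outside the 2×2 principal submatrix with row and column indices X_{k_i} and X_{k_i+1} for some k_i ∈ {1,…,N−1}, and det(A_i) = μ_i for every i. -/

import Mathlib

/-- Two length-`n` binary strings differ in exactly one position. -/
def DiffersInOnePos {n : ℕ} (x y : Fin n → Bool) : Prop :=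
  (Finset.univ.filter fun j => x j ≠ y j).card = 1

/-- `A` agrees with the identity matrix in every entry outside the 2×2 principal
submatrix with row and column indices `p` and `q` (a "two-level" pattern). -/
def IsTwoLevelOn {ι R : Type*} [DecidableEq ι] [Zero R] [One R]
    (A : Matrix ι ι R) (p q : ι) : Prop :=
  ∀ i j, (i ≠ p ∧ i ≠ q) ∨ (j ≠ p ∧ j ≠ q) → A i j = if i = j then 1 else 0

namespace GrayProof
open Matrix

variable {ι : Type*} [Fintype ι] [DecidableEq ι]

/-- The two-level embedding of a 2×2 matrix at positions `p ≠ q`. -/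
def twoE (p q : ι) (B : Matrix (Fin 2) (Fin 2) ℂ) : Matrix ι ι ℂ :=
  Matrix.of fun i j =>
    if i = p then (if j = p then B 0 0 else if j = q then B 0 1 else 0)
    else if i = q then (if j = p then B 1 0 else if j = q then B 1 1 else 0)
    else if i = j then 1 else 0

def pairEquiv (p q : ι) (hpq : p ≠ q) :
    (Fin 2 ⊕ {i : ι // i ≠ p ∧ i ≠ q}) ≃ ι where
  toFun := Sum.elim (fun j => if j = 0 then p else q) Subtype.val
  invFun i := if h1 : i = p then Sum.inl 0 else if h2 : i = q then Sum.inl 1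
    else Sum.inr ⟨i, h1, h2⟩
  left_inv x := by
    rcases x with j | ⟨i, h1, h2⟩
    · fin_cases j <;> simp [hpq, Ne.symm hpq]
    · simp [h1, h2]
  right_inv i := by
    by_cases h1 : i = p
    · simp [h1]
    · by_cases h2 : i = q <;> simp [h1, h2, Ne.symm hpq]

theorem twoE_submatrix (p q : ι) (hpq : p ≠ q) (B : Matrix (Fin 2) (Fin 2) ℂ) :
    (twoE p q B).submatrix (pairEquiv p q hpq) (pairEquiv p q hpq)
      = Matrix.fromBlocks B 0 0 (1 : Matrix {i : ι // i ≠ p ∧ i ≠ q} _ ℂ) := by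
  ext i j
  rcases i with i | ⟨i, hi1, hi2⟩ <;> rcases j with j | ⟨j, hj1, hj2⟩
  · fin_cases i <;> fin_cases j <;>
      simp [twoE, pairEquiv, Matrix.fromBlocks, hpq, Ne.symm hpq]
  · fin_cases i <;> simp [twoE, pairEquiv, Matrix.fromBlocks, hj1, hj2, Ne.symm hj1, Ne.symm hj2]
  · fin_cases j <;> simp [twoE, pairEquiv, Matrix.fromBlocks, hi1, hi2]
  · simp [twoE, pairEquiv, Matrix.fromBlocks, hi1, hi2, Matrix.one_apply, Subtype.ext_iff]

theorem twoE_eq (p q : ι) (hpq : p ≠ q) (B : Matrix (Fin 2) (Fin 2) ℂ) :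
    twoE p q B = (Matrix.fromBlocks B 0 0 (1 : Matrix {i : ι // i ≠ p ∧ i ≠ q} _ ℂ)).submatrix
      (pairEquiv p q hpq).symm (pairEquiv p q hpq).symm := by
  rw [← twoE_submatrix p q hpq B]
  ext i j
  simp

theorem twoE_det (p q : ι) (hpq : p ≠ q) (B : Matrix (Fin 2) (Fin 2) ℂ) :
    (twoE p q B).det = B.det := by
  rw [twoE_eq p q hpq B, Matrix.det_submatrix_equiv_self, Matrix.det_fromBlocks_zero₂₁,
    Matrix.det_one, mul_one]

theorem twoE_mul (p q : ι) (hpq : p ≠ q) (B C : Matrix (Fin 2) (Fin 2) ℂ) :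
    twoE p q B * twoE p q C = twoE p q (B * C) := by
  rw [twoE_eq p q hpq B, twoE_eq p q hpq C, twoE_eq p q hpq (B * C),
    Matrix.submatrix_mul_equiv _ _ _ (pairEquiv p q hpq).symm _]
  congr 1
  simp [Matrix.fromBlocks_multiply]

theorem twoE_one (p q : ι) (hpq : p ≠ q) : twoE p q (1 : Matrix (Fin 2) (Fin 2) ℂ) = 1 := by
  rw [twoE_eq p q hpq, Matrix.fromBlocks_one, Matrix.submatrix_one_equiv]

theorem twoE_conjTranspose (p q : ι) (hpq : p ≠ q) (B : Matrix (Fin 2) (Fin 2) ℂ) :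
    (twoE p q B)ᴴ = twoE p q Bᴴ := by
  rw [twoE_eq p q hpq B, twoE_eq p q hpq Bᴴ, Matrix.conjTranspose_submatrix,
    Matrix.fromBlocks_conjTranspose]
  simp

theorem twoE_mem_unitary (p q : ι) (hpq : p ≠ q) {B : Matrix (Fin 2) (Fin 2) ℂ}
    (hB : B ∈ Matrix.unitaryGroup (Fin 2) ℂ) :
    twoE p q B ∈ Matrix.unitaryGroup ι ℂ := by
  rw [Matrix.mem_unitaryGroup_iff] at hB ⊢
  show twoE p q B * (twoE p q B)ᴴ = 1
  rw [twoE_conjTranspose p q hpq, twoE_mul p q hpq]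
  rw [show Bᴴ = star B from rfl, hB, twoE_one p q hpq]

theorem twoE_isTwoLevelOn (p q : ι) (hpq : p ≠ q) (B : Matrix (Fin 2) (Fin 2) ℂ) :
    IsTwoLevelOn (twoE p q B) p q := by
  intro i j h
  rcases h with ⟨h1, h2⟩ | ⟨h1, h2⟩
  · simp [twoE, h1, h2]
  · by_cases hip : i = p
    · subst hip; simp [twoE, Ne.symm h1, h1, h2, hpq]
    · by_cases hiq : i = q
      · subst hiq; simp [twoE, Ne.symm h2, h1, h2, Ne.symm hpq]
      · simp [twoE, hip, hiq]

theorem sum_pair (p q : ι) (hpq : p ≠ q) (c1 c2 : ℂ) (x : ι → ℂ) :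
    ∑ j, (if j = p then c1 else if j = q then c2 else 0) * x j = c1 * x p + c2 * x q := by
  rw [Finset.sum_congr rfl (g := fun j => (if j = p then c1 * x j else 0)
      + (if j = q then c2 * x j else 0))
    (fun j _ => by rcases eq_or_ne j p with h | h <;> rcases eq_or_ne j q with h' | h' <;>
      simp_all)]
  rw [Finset.sum_add_distrib, Finset.sum_ite_eq' Finset.univ p, Finset.sum_ite_eq' Finset.univ q]
  simp

theorem twoE_mulVec_ne (p q : ι) (B : Matrix (Fin 2) (Fin 2) ℂ) (x : ι → ℂ) {i : ι}
    (hip : i ≠ p) (hiq : i ≠ q) : (twoE p q B).mulVec x i = x i := by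
  have hrow : ∀ j, twoE p q B i j = if i = j then 1 else 0 := fun j => by simp [twoE, hip, hiq]
  simp only [Matrix.mulVec, dotProduct, hrow, ite_mul, one_mul, zero_mul]
  simp [Finset.sum_ite_eq]

theorem twoE_mulVec_p (p q : ι) (hpq : p ≠ q) (B : Matrix (Fin 2) (Fin 2) ℂ) (x : ι → ℂ) :
    (twoE p q B).mulVec x p = B 0 0 * x p + B 0 1 * x q := by
  have hrow : ∀ j, twoE p q B p j = if j = p then B 0 0 else if j = q then B 0 1 else 0 :=
    fun j => by simp [twoE]
  simp only [Matrix.mulVec, dotProduct, hrow]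
  exact sum_pair p q hpq _ _ x

theorem twoE_mulVec_q (p q : ι) (hpq : p ≠ q) (B : Matrix (Fin 2) (Fin 2) ℂ) (x : ι → ℂ) :
    (twoE p q B).mulVec x q = B 1 0 * x p + B 1 1 * x q := by
  have hrow : ∀ j, twoE p q B q j = if j = p then B 1 0 else if j = q then B 1 1 else 0 :=
    fun j => by simp [twoE, Ne.symm hpq]
  simp only [Matrix.mulVec, dotProduct, hrow]
  exact sum_pair p q hpq _ _ x

end GrayProof
namespace GrayProof
open Matrix Complex

noncomputable def rotM (a b d : ℂ) : Matrix (Fin 2) (Fin 2) ℂ :=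
  if a = 0 ∧ b = 0 then !![d, 0; 0, 1]
  else !![d * b / (Real.sqrt (normSq a + normSq b) : ℝ),
          -(d * a) / (Real.sqrt (normSq a + normSq b) : ℝ);
          (starRingEnd ℂ) a / (Real.sqrt (normSq a + normSq b) : ℝ),
          (starRingEnd ℂ) b / (Real.sqrt (normSq a + normSq b) : ℝ)]

theorem rot_aux {a b : ℂ} (h : ¬(a = 0 ∧ b = 0)) :
    ((Real.sqrt (normSq a + normSq b) : ℝ) : ℂ) ≠ 0 ∧
    ((Real.sqrt (normSq a + normSq b) : ℝ) : ℂ) *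
      ((Real.sqrt (normSq a + normSq b) : ℝ) : ℂ) = normSq a + normSq b := by
  have hpos : 0 < normSq a + normSq b := by
    rcases not_and_or.mp h with h' | h'
    · have h1 := normSq_pos.mpr h'
      have h2 := normSq_nonneg b
      linarith
    · have h1 := normSq_pos.mpr h'
      have h2 := normSq_nonneg a
      linarith
  have h1 : Real.sqrt (normSq a + normSq b) ≠ 0 := (Real.sqrt_pos.mpr hpos).ne'
  constructor
  · exact_mod_cast h1
  · rw [← Complex.ofReal_mul, Real.mul_self_sqrt hpos.le]
    push_cast
    ring

theorem rotM_det {a b d : ℂ} (hd : ‖d‖ = 1) : (rotM a b d).det = d := by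
  have hd2 : d * (starRingEnd ℂ) d = 1 := by
    rw [Complex.mul_conj, ← Complex.sq_norm, hd]
    norm_num
  rw [rotM]
  split_ifs with h
  · simp [Matrix.det_fin_two_of]
  · obtain ⟨hs, hs2⟩ := rot_aux h
    rw [Matrix.det_fin_two_of]
    field_simp
    linear_combination d * Complex.mul_conj b + d * Complex.mul_conj a - d * hs2

theorem rotM_unitary {a b d : ℂ} (hd : ‖d‖ = 1) :
    rotM a b d ∈ Matrix.unitaryGroup (Fin 2) ℂ := by
  have hd2 : d * (starRingEnd ℂ) d = 1 := by
    rw [Complex.mul_conj, ← Complex.sq_norm, hd]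
    norm_num
  rw [Matrix.mem_unitaryGroup_iff]
  show rotM a b d * (rotM a b d)ᴴ = 1
  rw [rotM]
  split_ifs with h
  · ext i j
    fin_cases i <;> fin_cases j <;>
      simp [Matrix.mul_apply, Fin.sum_univ_two, Matrix.conjTranspose_apply, Matrix.one_apply, hd2]
  · obtain ⟨hs, hs2⟩ := rot_aux h
    ext i j
    fin_cases i <;> fin_cases j <;>
      simp only [Matrix.mul_apply, Fin.sum_univ_two, Matrix.conjTranspose_apply,
          Matrix.one_apply, Matrix.of_apply, Matrix.cons_val', Matrix.cons_val_zero, Matrix.cons_val_one,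
          Matrix.head_cons, Matrix.head_fin_const, Matrix.empty_val', Matrix.cons_val_fin_one,
          Fin.mk_zero, Fin.mk_one, Fin.zero_eta, map_div₀, _root_.map_mul, map_neg,
          Complex.conj_ofReal, Complex.conj_conj, Complex.star_def, zero_ne_one, one_ne_zero,
          if_true, if_false] <;>
      field_simp
    · linear_combination ((starRingEnd ℂ) b * b) * hd2 + ((starRingEnd ℂ) a * a) * hd2
        - Complex.normSq_eq_conj_mul_self (z := a) - Complex.normSq_eq_conj_mul_self (z := b)
        - hs2
    · ring
    · ring
    · linear_combination - Complex.normSq_eq_conj_mul_self (z := a)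
        - Complex.normSq_eq_conj_mul_self (z := b) - hs2


theorem rotM_apply_fst {a b d : ℂ} :
    rotM a b d 0 0 * a + rotM a b d 0 1 * b = 0 := by
  rw [rotM]
  split_ifs with h
  · simp [h.1, h.2]
  · show d * b / _ * a + -(d * a) / _ * b = 0
    ring

theorem rotM_apply_snd {a b d : ℂ} :
    rotM a b d 1 0 * a + rotM a b d 1 1 * b
      = ((Real.sqrt (normSq a + normSq b) : ℝ) : ℂ) := by
  rw [rotM]
  split_ifs with h
  · simp [h.1, h.2]
  · obtain ⟨hs, hs2⟩ := rot_aux h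
    show (starRingEnd ℂ) a / _ * a + (starRingEnd ℂ) b / _ * b = _
    field_simp
    linear_combination - Complex.normSq_eq_conj_mul_self (z := a)
      - Complex.normSq_eq_conj_mul_self (z := b) - hs2

end GrayProof
namespace GrayProof
open Matrix Complex

/-- Property of one factor in the sweep. -/
def relS (N t : ℕ) (T : Matrix (Fin N) (Fin N) ℂ) (z : ℂ) : Prop :=
  T ∈ Matrix.unitaryGroup (Fin N) ℂ ∧
    (∃ k k' : Fin N, (k : ℕ) + 1 = (k' : ℕ) ∧ (k' : ℕ) ≤ t ∧ IsTwoLevelOn T k k') ∧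
    T.det = z

noncomputable def pSum (N : ℕ) (v : Fin N → ℂ) (r : ℕ) : ℝ :=
  ∑ j ∈ Finset.univ.filter (fun j : Fin N => (j : ℕ) ≤ r), normSq (v j)

theorem pSum_nonneg (N : ℕ) (v : Fin N → ℂ) (r : ℕ) : 0 ≤ pSum N v r :=
  Finset.sum_nonneg fun j _ => normSq_nonneg (v j)

theorem pSum_succ (N : ℕ) (v : Fin N → ℂ) (r : ℕ) (hr : r + 1 < N) :
    pSum N v (r + 1) = pSum N v r + normSq (v ⟨r + 1, hr⟩) := by
  unfold pSum
  have h1 : Finset.univ.filter (fun j : Fin N => (j : ℕ) ≤ r + 1)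
      = insert (⟨r + 1, hr⟩ : Fin N) (Finset.univ.filter (fun j : Fin N => (j : ℕ) ≤ r)) := by
    ext j
    simp only [Finset.mem_filter, Finset.mem_univ, true_and, Finset.mem_insert, Fin.ext_iff]
    omega
  have h2 : (⟨r + 1, hr⟩ : Fin N) ∉ Finset.univ.filter (fun j : Fin N => (j : ℕ) ≤ r) := by
    simp
  rw [h1, Finset.sum_insert h2]
  ring

theorem sweep (N t : ℕ) (ht : t < N) (v : Fin N → ℂ) :
    ∀ (r : ℕ), r ≤ t → ∀ (d : List ℂ), d.length = r → (∀ z ∈ d, ‖z‖ = 1) →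
    ∃ L : List (Matrix (Fin N) (Fin N) ℂ),
      List.Forall₂ (relS N t) L d ∧
      (∀ i : Fin N, (i : ℕ) < r → L.prod.mulVec v i = 0) ∧
      (∀ i : Fin N, r < (i : ℕ) → L.prod.mulVec v i = v i) ∧
      (∀ i : Fin N, (i : ℕ) = r → normSq (L.prod.mulVec v i) = pSum N v r) ∧
      (1 ≤ r → ∀ i : Fin N, (i : ℕ) = r →
        L.prod.mulVec v i = ((Real.sqrt (pSum N v r) : ℝ) : ℂ)) := by
  intro r
  induction r with
  | zero =>
    intro _ d hd _
    rw [List.length_eq_zero_iff] at hd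
    subst hd
    refine ⟨[], List.Forall₂.nil, ?_, ?_, ?_, ?_⟩
    · intro i hi; omega
    · intro i _; simp [Matrix.one_mulVec]
    · intro i hi
      simp only [List.prod_nil, Matrix.one_mulVec]
      have h1 : Finset.univ.filter (fun j : Fin N => (j : ℕ) ≤ 0) = {i} := by
        ext j
        simp only [Finset.mem_filter, Finset.mem_univ, true_and, Finset.mem_singleton,
          Fin.ext_iff, Nat.le_zero, hi]
      rw [pSum, h1, Finset.sum_singleton]
    · intro h; omega
  | succ r ih =>
    intro hr d hd hd1
    rcases d with _ | ⟨z, d'⟩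
    · simp at hd
    have hz : ‖z‖ = 1 := hd1 z (by simp)
    obtain ⟨L', hF, hlt, hgt, hsq, hval⟩ := ih (by omega) d' (by simpa using hd)
      (fun z hz => hd1 z (by simp [hz]))
    set w := L'.prod.mulVec v with hw
    have hrN : r < N := by omega
    have hr1N : r + 1 < N := by omega
    set p : Fin N := ⟨r, hrN⟩ with hp
    set q : Fin N := ⟨r + 1, hr1N⟩ with hq
    have hpv : (p : ℕ) = r := rfl
    have hqv : (q : ℕ) = r + 1 := rfl
    have hpq : p ≠ q := Fin.ne_of_val_ne (by omega)
    set a := w p with hadef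
    set b := w q with hbdef
    have hb : b = v q := hgt q (by omega)
    have ha2 : normSq a = pSum N v r := hsq p (by omega)
    set T := twoE p q (rotM a b z) with hT
    refine ⟨T :: L', ?_, ?_, ?_, ?_, ?_⟩
    · refine List.Forall₂.cons ⟨?_, ⟨p, q, by omega, by omega, ?_⟩, ?_⟩ hF
      · exact twoE_mem_unitary p q hpq (rotM_unitary hz)
      · exact twoE_isTwoLevelOn p q hpq _
      · rw [hT, twoE_det p q hpq, rotM_det hz]
    all_goals
      have hprod : (T :: L').prod.mulVec v = T.mulVec w := by
        rw [List.prod_cons, ← Matrix.mulVec_mulVec, hw]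
    · -- i < r + 1
      intro i hi
      rw [hprod]
      rcases Nat.lt_or_ge (i : ℕ) r with h | h
      · have hip : i ≠ p := Fin.ne_of_val_ne (by omega)
        have hiq : i ≠ q := Fin.ne_of_val_ne (by omega)
        rw [twoE_mulVec_ne p q _ _ hip hiq]
        exact hlt i h
      · have hieq : i = p := Fin.ext (by omega)
        subst hieq
        rw [twoE_mulVec_p p q hpq]
        exact rotM_apply_fst
    · -- i > r + 1
      intro i hi
      rw [hprod]
      have hip : i ≠ p := Fin.ne_of_val_ne (by omega)
      have hiq : i ≠ q := Fin.ne_of_val_ne (by omega)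
      rw [twoE_mulVec_ne p q _ _ hip hiq]
      exact hgt i (by omega)
    all_goals
      have hkey : T.mulVec w q = ((Real.sqrt (pSum N v (r + 1)) : ℝ) : ℂ) := by
        rw [twoE_mulVec_q p q hpq, rotM_apply_snd, ha2, hb, pSum_succ N v r hr1N]
    · -- normSq at r+1
      intro i hi
      have hieq : i = q := Fin.ext (by omega)
      subst hieq
      rw [hprod, hkey, normSq_ofReal, Real.mul_self_sqrt (pSum_nonneg N v (r + 1))]
    · -- value at r+1
      intro _ i hi
      have hieq : i = q := Fin.ext (by omega)
      subst hieq
      rw [hprod, hkey]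

end GrayProof
namespace GrayProof
open Matrix Complex

theorem mul_apply_col {N : ℕ} (M U : Matrix (Fin N) (Fin N) ℂ) (i c : Fin N) :
    (M * U) i c = M.mulVec (fun k => U k c) i := by
  simp [Matrix.mul_apply, Matrix.mulVec, dotProduct]

theorem col_entry {N : ℕ} {U : Matrix (Fin N) (Fin N) ℂ}
    (hU : U ∈ Matrix.unitaryGroup (Fin N) ℂ) {k : Fin N}
    (hk : ∀ i, U i k = if i = k then 1 else 0) {c : Fin N} (hkc : k ≠ c) :
    U k c = 0 := by
  have h1 : star U * U = 1 := Matrix.mem_unitaryGroup_iff'.mp hU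
  have h2 := congrFun (congrFun h1 k) c
  simp only [Matrix.mul_apply, Matrix.star_apply, hk] at h2
  rw [Finset.sum_congr rfl (g := fun m => if m = k then U m c else 0)
    (fun m _ => by split_ifs with h <;> simp [h]), Finset.sum_ite_eq' Finset.univ k] at h2
  simpa [Matrix.one_apply, hkc] using h2

theorem col_norm {N : ℕ} {U : Matrix (Fin N) (Fin N) ℂ}
    (hU : U ∈ Matrix.unitaryGroup (Fin N) ℂ) (c : Fin N) :
    ∑ m, ((normSq (U m c) : ℝ) : ℂ) = 1 := by
  have h1 : star U * U = 1 := Matrix.mem_unitaryGroup_iff'.mp hU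
  have h2 := congrFun (congrFun h1 c) c
  simp only [Matrix.mul_apply, Matrix.star_apply, Matrix.one_apply_eq] at h2
  rw [← h2]
  exact Finset.sum_congr rfl fun m _ => Complex.normSq_eq_conj_mul_self

theorem star_list_prod {M : Type*} [Monoid M] [StarMul M] (l : List M) :
    star l.prod = (l.reverse.map star).prod := by
  induction l with
  | nil => simp
  | cons a l ih => simp [StarMul.star_mul, ih]

theorem forall₂_mem_left {α β : Type*} {R : α → β → Prop} {l₁ : List α} {l₂ : List β}
    (h : List.Forall₂ R l₁ l₂) : ∀ {a}, a ∈ l₁ → ∃ b ∈ l₂, R a b := by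
  induction h with
  | nil => intro a ha; simp at ha
  | cons hr _ ih =>
    intro a ha
    rcases List.mem_cons.mp ha with rfl | ha
    · exact ⟨_, by simp, hr⟩
    · obtain ⟨b, hb, hRb⟩ := ih ha
      exact ⟨b, by simp [hb], hRb⟩

theorem forall₂_map_eq {α β : Type*} {R : α → β → Prop} {f : α → β}
    (hf : ∀ a b, R a b → f a = b) : ∀ {l₁ : List α} {l₂ : List β},
    List.Forall₂ R l₁ l₂ → l₁.map f = l₂ := by
  intro l₁ l₂ h
  induction h with
  | nil => simp
  | cons hr _ ih => simp [hf _ _ hr, ih]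

theorem abs_list_prod_one (l : List ℂ) (h : ∀ z ∈ l, ‖z‖ = 1) :
    ‖l.prod‖ = 1 := by
  induction l with
  | nil => simp
  | cons a l ih =>
    rw [List.prod_cons, norm_mul, h a (by simp), one_mul]
    exact ih fun z hz => h z (by simp [hz])

theorem det_list_prod {N : ℕ} (L : List (Matrix (Fin N) (Fin N) ℂ)) :
    L.prod.det = (L.map Matrix.det).prod := by
  induction L with
  | nil => simp
  | cons A L ih => simp [Matrix.det_mul, ih]

theorem prod_fix_single {N t : ℕ} (L : List (Matrix (Fin N) (Fin N) ℂ))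
    (hL : ∀ T ∈ L, ∃ k k' : Fin N, (k : ℕ) + 1 = (k' : ℕ) ∧ (k' : ℕ) ≤ t ∧ IsTwoLevelOn T k k')
    (k : Fin N) (hk : t < (k : ℕ)) :
    L.prod.mulVec (Pi.single k 1) = Pi.single k 1 := by
  induction L with
  | nil => simp only [List.prod_nil, Matrix.one_mulVec]
  | cons T L ih =>
    rw [List.prod_cons, ← Matrix.mulVec_mulVec, ih fun T' hT' => hL T' (by simp [hT'])]
    obtain ⟨p, q, hpq1, hq, hTL⟩ := hL T (by simp)
    funext i
    simp only [Matrix.mulVec_single_one, Matrix.col_apply]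
    have h1 : T i k = if i = k then 1 else 0 :=
      hTL i k (Or.inr ⟨Fin.ne_of_val_ne (by omega), Fin.ne_of_val_ne (by omega)⟩)
    rw [h1, Pi.single_apply]

/-- Relation for factors in the final statement over `Fin N`. -/
def relF (N : ℕ) (A : Matrix (Fin N) (Fin N) ℂ) (z : ℂ) : Prop :=
  A ∈ Matrix.unitaryGroup (Fin N) ℂ ∧
    (∃ k k' : Fin N, (k : ℕ) + 1 = (k' : ℕ) ∧ IsTwoLevelOn A k k') ∧
    A.det = z

theorem main (N : ℕ) (hN : 2 ≤ N) :
    ∀ t : ℕ, 1 ≤ t → t ≤ N → ∀ U : Matrix (Fin N) (Fin N) ℂ,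
    U ∈ Matrix.unitaryGroup (Fin N) ℂ →
    (∀ k : Fin N, t ≤ (k : ℕ) → ∀ i, U i k = if i = k then 1 else 0) →
    ∀ μ : List ℂ, μ.length = t * (t - 1) / 2 → (∀ z ∈ μ, ‖z‖ = 1) →
    μ.prod = U.det →
    ∃ L : List (Matrix (Fin N) (Fin N) ℂ), U = L.prod ∧ List.Forall₂ (relF N) L μ := by
  intro t ht
  induction t, ht using Nat.le_induction with
  | base =>
    intro _ U hU hfix μ hlen hμ1 hprod
    have hμnil : μ = [] := List.length_eq_zero_iff.mp (by simpa using hlen)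
    subst hμnil
    have h0N : 0 < N := by omega
    have h1N : 1 < N := by omega
    set f0 : Fin N := ⟨0, h0N⟩ with hf0
    set f1 : Fin N := ⟨1, h1N⟩ with hf1
    have hpq : f0 ≠ f1 := Fin.ne_of_val_ne (show (0 : ℕ) ≠ 1 by omega)
    have horth : ∀ i : Fin N, i ≠ f0 → U i f0 = 0 := by
      intro i hi
      have hi1 : 1 ≤ (i : ℕ) := by
        rcases Nat.eq_zero_or_pos (i : ℕ) with h | h
        · exact absurd (Fin.ext h) hi
        · omega
      exact col_entry hU (hfix i hi1) hi
    have hEq : U = twoE f0 f1 !![U f0 f0, 0; 0, 1] := by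
      ext i j
      rcases eq_or_ne i f0 with rfl | hi
      · rcases eq_or_ne j f0 with rfl | hj
        · simp [twoE]
        · have hj1 : 1 ≤ (j : ℕ) := by
            rcases Nat.eq_zero_or_pos (j : ℕ) with h | h
            · exact absurd (Fin.ext h) hj
            · omega
          rw [hfix j hj1]
          rcases eq_or_ne j f1 with rfl | hj2
          · simp [twoE, hpq, Ne.symm hpq]
          · simp [twoE, hj, hj2, Ne.symm hj]
      · rcases eq_or_ne j f0 with rfl | hj
        · rw [horth i hi]
          rcases eq_or_ne i f1 with rfl | hi2
          · simp [twoE, hpq, Ne.symm hpq]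
          · simp [twoE, hi, hi2, Ne.symm hi]
        · have hj1 : 1 ≤ (j : ℕ) := by
            rcases Nat.eq_zero_or_pos (j : ℕ) with h | h
            · exact absurd (Fin.ext h) hj
            · omega
          rw [hfix j hj1]
          rcases eq_or_ne i f1 with rfl | hi2
          · rcases eq_or_ne j f1 with rfl | hj2
            · simp [twoE, Ne.symm hpq]
            · simp [twoE, hj, hj2, Ne.symm hj2]
          · simp [twoE, hi, hi2]
    have hdet : U.det = U f0 f0 := by
      conv_lhs => rw [hEq]
      rw [twoE_det f0 f1 hpq, Matrix.det_fin_two_of]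
      ring
    have hU00 : U f0 f0 = 1 := by
      have h := hprod
      rw [List.prod_nil, hdet] at h
      exact h.symm
    have hB : !![(1 : ℂ), 0; 0, 1] = 1 := by
      ext i j
      fin_cases i <;> fin_cases j <;> simp [Matrix.one_apply]
    refine ⟨[], ?_, List.Forall₂.nil⟩
    calc U = twoE f0 f1 !![U f0 f0, 0; 0, 1] := hEq
      _ = twoE f0 f1 1 := by rw [hU00, hB]
      _ = 1 := twoE_one f0 f1 hpq
      _ = List.prod [] := List.prod_nil.symm
  | succ t ht ih =>
    intro hle U hU hfix μ hlen hμ1 hprod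
    have htN : t < N := by omega
    set ft : Fin N := ⟨t, htN⟩ with hft
    have hftv : (ft : ℕ) = t := rfl
    set v : Fin N → ℂ := fun i => U i ft with hv
    have hvhigh : ∀ i : Fin N, t < (i : ℕ) → v i = 0 := by
      intro i hi
      exact col_entry hU (hfix i (by omega)) (Fin.ne_of_val_ne (by omega))
    have hlen' : μ.length = t + t * (t - 1) / 2 := by
      obtain ⟨s, rfl⟩ : ∃ s, t = s + 1 := ⟨t - 1, by omega⟩
      rw [hlen]
      simp only [Nat.add_sub_cancel]
      have h1 : (s + 1 + 1) * (s + 1) = 2 * (s + 1) + (s + 1) * s := by ring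
      have h2 : (s + 1) * s % 2 = 0 := by
        have h3 := Nat.even_mul_succ_self s
        rw [Nat.even_iff] at h3
        have h4 : (s + 1) * s = s * (s + 1) := Nat.mul_comm _ _
        omega
      omega
    set μ₁ := μ.take t with hμ₁
    set μ₂ := μ.drop t with hμ₂
    have hlen1 : μ₁.length = t := by
      rw [hμ₁, List.length_take]
      omega
    have hlen2 : μ₂.length = t * (t - 1) / 2 := by
      rw [hμ₂, List.length_drop]
      omega
    set d : List ℂ := (μ₁.map (starRingEnd ℂ)).reverse with hd
    have hdlen : d.length = t := by simp [hd, hlen1]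
    have hdabs : ∀ z ∈ d, ‖z‖ = 1 := by
      intro z hz
      rw [hd, List.mem_reverse, List.mem_map] at hz
      obtain ⟨y, hy, rfl⟩ := hz
      rw [Complex.norm_conj]
      exact hμ1 y (List.take_subset t μ hy)
    obtain ⟨L, hF, hlt, hgt, hsq, hval⟩ := sweep N t htN v t le_rfl d hdlen hdabs
    set W := L.prod * U with hW
    have hpairs : ∀ T ∈ L, ∃ k k' : Fin N,
        (k : ℕ) + 1 = (k' : ℕ) ∧ (k' : ℕ) ≤ t ∧ IsTwoLevelOn T k k' := by
      intro T hT
      obtain ⟨z, _, hR⟩ := forall₂_mem_left hF hT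
      exact hR.2.1
    have hWfix : ∀ k : Fin N, t ≤ (k : ℕ) → ∀ i, W i k = if i = k then 1 else 0 := by
      intro k hk i
      rcases eq_or_ne (k : ℕ) t with hkt | hkt
      · have hkeq : k = ft := Fin.ext hkt
        subst hkeq
        rw [hW, mul_apply_col]
        have hvcol : (fun m => U m ft) = v := rfl
        rw [hvcol]
        rcases lt_trichotomy (i : ℕ) t with h | h | h
        · rw [hlt i h, eq_comm, if_neg]
          exact fun hik => by rw [hik] at h; omega
        · have hieq : i = ft := Fin.ext h
          subst hieq
          have hp1 : pSum N v t = 1 := by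
            have hsum : ∑ m, ((normSq (v m) : ℝ) : ℂ) = 1 := col_norm hU ft
            have hext : pSum N v t = ∑ m, normSq (v m) := by
              apply Finset.sum_subset (Finset.subset_univ _)
              intro x _ hx
              simp only [Finset.mem_filter, Finset.mem_univ, true_and, not_le] at hx
              rw [hvhigh x hx, normSq_zero]
            have hcast : ((pSum N v t : ℝ) : ℂ) = 1 := by
              rw [hext]
              push_cast
              exact hsum
            exact_mod_cast hcast
          rw [hval ht ft rfl, hp1, Real.sqrt_one, if_pos rfl]
          norm_num
        · rw [hgt i h, hvhigh i h, eq_comm, if_neg]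
          exact fun hik => by rw [hik] at h; omega
      · have hk1 : t + 1 ≤ (k : ℕ) := by omega
        rw [hW, mul_apply_col]
        have hcolk : (fun m => U m k) = Pi.single k 1 :=
          funext fun m => by rw [hfix k hk1 m, Pi.single_apply]
        rw [hcolk, prod_fix_single L hpairs k (by omega), Pi.single_apply]
    have hLu : L.prod ∈ Matrix.unitaryGroup (Fin N) ℂ :=
      Submonoid.list_prod_mem _ fun T hT => by
        obtain ⟨z, _, hR⟩ := forall₂_mem_left hF hT
        exact hR.1
    have hWu : W ∈ Matrix.unitaryGroup (Fin N) ℂ := by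
      rw [hW]; exact mul_mem hLu hU
    have hdetmapL : L.map Matrix.det = d := forall₂_map_eq (fun T z h => h.2.2) hF
    have hdetL : L.prod.det = d.prod := by
      rw [det_list_prod, hdetmapL]
    have hdprod : d.prod = (starRingEnd ℂ) μ₁.prod := by
      rw [hd, List.prod_reverse, ← map_list_prod]
    have habs1 : ‖μ₁.prod‖ = 1 :=
      abs_list_prod_one μ₁ fun z hz => hμ1 z (List.take_subset t μ hz)
    have hconjmul : (starRingEnd ℂ) μ₁.prod * μ₁.prod = 1 := by
      rw [mul_comm, Complex.mul_conj, ← Complex.sq_norm, habs1]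
      norm_num
    have hμ12 : μ₁.prod * μ₂.prod = μ.prod := by
      rw [← List.prod_append, List.take_append_drop]
    have hWdet : μ₂.prod = W.det := by
      rw [hW, Matrix.det_mul, hdetL, hdprod, ← hprod, ← hμ12]
      calc μ₂.prod = 1 * μ₂.prod := by ring
        _ = (starRingEnd ℂ) μ₁.prod * (μ₁.prod * μ₂.prod) := by rw [← hconjmul]; ring
    obtain ⟨L₂, hWL₂, hF₂⟩ := ih (by omega) W hWu hWfix μ₂ hlen2
      (fun z hz => hμ1 z (List.drop_subset t μ hz)) hWdet
    have hstar : star L.prod * L.prod = 1 := Matrix.mem_unitaryGroup_iff'.mp hLu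
    have hUeq : U = (L.reverse.map star).prod * L₂.prod := by
      rw [← star_list_prod, ← hWL₂, hW]
      calc U = 1 * U := (one_mul U).symm
        _ = star L.prod * L.prod * U := by rw [hstar]
        _ = star L.prod * (L.prod * U) := by rw [mul_assoc]
    refine ⟨L.reverse.map star ++ L₂, by rw [List.prod_append]; exact hUeq, ?_⟩
    have hμsplit : μ₁ ++ μ₂ = μ := List.take_append_drop t μ
    rw [← hμsplit]
    refine List.rel_append ?_ hF₂
    rw [List.forall₂_map_left_iff]
    have hFr : List.Forall₂ (relS N t) L.reverse (μ₁.map (starRingEnd ℂ)) := by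
      simpa [hd] using List.forall₂_reverse_iff.mpr hF
    rw [List.forall₂_map_right_iff] at hFr
    refine List.Forall₂.imp ?_ hFr
    intro T z hTz
    obtain ⟨hu, ⟨k, k', hkk, _, h2l⟩, hdet2⟩ := hTz
    refine ⟨Unitary.star_mem hu, ⟨k, k', hkk, ?_⟩, ?_⟩
    · intro i j hcond
      have h1 : T j i = if j = i then 1 else 0 := h2l j i (Or.symm hcond)
      show (star T) i j = _
      rw [Matrix.star_apply, h1]
      rcases eq_or_ne i j with rfl | hne
      · simp
      · rw [if_neg (Ne.symm hne), if_neg hne, star_zero]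
    · show (star T).det = z
      have hTT : star T = Tᴴ := rfl
      rw [hTT, Matrix.det_conjTranspose, hdet2]
      simp

end GrayProof

namespace GrayProof
open Matrix Complex

theorem forall₂_get {α β : Type*} {R : α → β → Prop} :
    ∀ {l₁ : List α} {l₂ : List β}, List.Forall₂ R l₁ l₂ →
    ∀ (i : ℕ) (h1 : i < l₁.length) (h2 : i < l₂.length), R (l₁[i]'h1) (l₂[i]'h2) := by
  intro l₁ l₂ h
  induction h with
  | nil => intro i h1 _; simp at h1
  | cons hr hF ih =>
    intro i h1 h2
    cases i with
    | zero => simpa using hr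
    | succ i => simpa using ih i (by simpa using h1) (by simpa using h2)

theorem unitary_submatrix {ι κ : Type*} [Fintype ι] [DecidableEq ι] [Fintype κ] [DecidableEq κ]
    (e : κ ≃ ι) {U : Matrix ι ι ℂ} (hU : U ∈ Matrix.unitaryGroup ι ℂ) :
    U.submatrix e e ∈ Matrix.unitaryGroup κ ℂ := by
  rw [Matrix.mem_unitaryGroup_iff'] at hU ⊢
  show (U.submatrix ⇑e ⇑e)ᴴ * U.submatrix ⇑e ⇑e = 1
  rw [Matrix.conjTranspose_submatrix, Matrix.submatrix_mul_equiv]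
  rw [show Uᴴ * U = 1 from hU, Matrix.submatrix_one_equiv]

theorem submatrix_list_prod {ι : Type*} [Fintype ι] [DecidableEq ι] {N : ℕ}
    (e : Fin N ≃ ι) (L : List (Matrix (Fin N) (Fin N) ℂ)) :
    (L.map fun M => M.submatrix ⇑e.symm ⇑e.symm).prod = L.prod.submatrix ⇑e.symm ⇑e.symm := by
  induction L with
  | nil => simp [Matrix.submatrix_one_equiv]
  | cons A L ih => rw [List.map_cons, List.prod_cons, List.prod_cons, ih,
      Matrix.submatrix_mul_equiv]

theorem isTwoLevelOn_submatrix {ι : Type*} [DecidableEq ι] {N : ℕ}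
    (e : Fin N ≃ ι) {A : Matrix (Fin N) (Fin N) ℂ} {p q : Fin N}
    (h : IsTwoLevelOn A p q) :
    IsTwoLevelOn (A.submatrix ⇑e.symm ⇑e.symm) (e p) (e q) := by
  intro i j hcond
  have h1 : A (e.symm i) (e.symm j) = if e.symm i = e.symm j then 1 else 0 := by
    apply h
    rcases hcond with ⟨h1, h2⟩ | ⟨h1, h2⟩
    · exact Or.inl ⟨fun hc => h1 (by rw [← hc]; simp), fun hc => h2 (by rw [← hc]; simp)⟩
    · exact Or.inr ⟨fun hc => h1 (by rw [← hc]; simp), fun hc => h2 (by rw [← hc]; simp)⟩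
  rw [Matrix.submatrix_apply, h1]
  congr 1
  simp only [eq_iff_iff]
  constructor
  · intro hc; exact e.symm.injective.eq_iff.mp hc
  · intro hc; rw [hc]

end GrayProof


/-- Every `2^n × 2^n` unitary matrix is a product of `m = N(N-1)/2` (`N = 2^n`)
`Gₙ`-unitary matrices with any prescribed determinants of modulus 1 whose
product equals `det U`. -/
theorem unitary_eq_prod_gray_unitary_prescribed_det (n : ℕ) (hn : 1 ≤ n)
    (X : Fin (2 ^ n) → (Fin n → Bool)) (hbij : Function.Bijective X)
    (hadj : ∀ (k : ℕ) (hk : k + 1 < 2 ^ n),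
      DiffersInOnePos (X ⟨k, by omega⟩) (X ⟨k + 1, hk⟩))
    (hwrap : DiffersInOnePos
      (X ⟨2 ^ n - 1, Nat.sub_lt (by positivity) one_pos⟩)
      (X ⟨0, by positivity⟩))
    (U : Matrix (Fin n → Bool) (Fin n → Bool) ℂ)
    (hU : U ∈ Matrix.unitaryGroup (Fin n → Bool) ℂ)
    (μ : Fin (2 ^ n * (2 ^ n - 1) / 2) → ℂ) (hμ : ∀ i, ‖μ i‖ = 1)
    (hprod : ∏ i, μ i = U.det) :
    ∃ A : Fin (2 ^ n * (2 ^ n - 1) / 2) → Matrix (Fin n → Bool) (Fin n → Bool) ℂ,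
      U = (List.ofFn A).prod ∧
      ∀ i, A i ∈ Matrix.unitaryGroup (Fin n → Bool) ℂ ∧
        (∃ (k : ℕ) (hk : k + 1 < 2 ^ n),
          IsTwoLevelOn (A i) (X ⟨k, by omega⟩) (X ⟨k + 1, hk⟩)) ∧
        (A i).det = μ i := by
  classical
  have hN : 2 ≤ 2 ^ n := by
    calc 2 = 2 ^ 1 := by norm_num
      _ ≤ 2 ^ n := Nat.pow_le_pow_right (by norm_num) hn
  let e : Fin (2 ^ n) ≃ (Fin n → Bool) := Equiv.ofBijective X hbij
  have heX : ∀ k : Fin (2 ^ n), e k = X k := fun k => rfl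
  have hU'unit : U.submatrix ⇑e ⇑e ∈ Matrix.unitaryGroup (Fin (2 ^ n)) ℂ :=
    GrayProof.unitary_submatrix e hU
  have hU'det : (U.submatrix ⇑e ⇑e).det = U.det := Matrix.det_submatrix_equiv_self e U
  have hμLlen : (List.ofFn μ).length = 2 ^ n * (2 ^ n - 1) / 2 := by simp
  have hμLabs : ∀ z ∈ List.ofFn μ, ‖z‖ = 1 := by
    intro z hz
    rw [List.mem_ofFn] at hz
    obtain ⟨i, rfl⟩ := hz
    exact hμ i
  have hμLprod : (List.ofFn μ).prod = (U.submatrix ⇑e ⇑e).det := by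
    rw [List.prod_ofFn, hU'det, hprod]
  obtain ⟨L, hUL, hF⟩ := GrayProof.main (2 ^ n) hN (2 ^ n) (by omega) le_rfl
    (U.submatrix ⇑e ⇑e) hU'unit
    (fun k hk i => absurd k.isLt (by omega)) (List.ofFn μ) hμLlen hμLabs hμLprod
  have hLlen : L.length = 2 ^ n * (2 ^ n - 1) / 2 := by rw [hF.length_eq, hμLlen]
  refine ⟨fun i => (L[(i : ℕ)]'(by rw [hLlen]; exact i.isLt)).submatrix ⇑e.symm ⇑e.symm, ?_, ?_⟩
  · have hofn : List.ofFn (fun i : Fin (2 ^ n * (2 ^ n - 1) / 2) =>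
        (L[(i : ℕ)]'(by rw [hLlen]; exact i.isLt)).submatrix ⇑e.symm ⇑e.symm)
        = L.map fun M => M.submatrix ⇑e.symm ⇑e.symm := by
      apply List.ext_getElem
      · simp [hLlen]
      · intro i h1 h2
        simp
    rw [hofn, GrayProof.submatrix_list_prod e L, ← hUL]
    ext i j
    simp
  · intro i
    have hi : (i : ℕ) < L.length := by rw [hLlen]; exact i.isLt
    have hi2 : (i : ℕ) < (List.ofFn μ).length := by rw [hμLlen]; exact i.isLt
    have hR := GrayProof.forall₂_get hF (i : ℕ) hi hi2
    obtain ⟨hunit, ⟨k, k', hkk, h2l⟩, hdet⟩ := hR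
    have hμget : (List.ofFn μ)[(i : ℕ)]'hi2 = μ i := by simp
    refine ⟨GrayProof.unitary_submatrix e.symm hunit, ?_, ?_⟩
    · have hkv := k.isLt
      have hkv' := k'.isLt
      refine ⟨(k : ℕ), by omega, ?_⟩
      have h := GrayProof.isTwoLevelOn_submatrix e h2l
      have h1 : X (⟨(k : ℕ), by omega⟩ : Fin (2 ^ n)) = e k := by rw [heX]
      have h2 : X (⟨(k : ℕ) + 1, by omega⟩ : Fin (2 ^ n)) = e k' := by
        rw [heX]
        exact congrArg X (Fin.ext hkk)
      rw [h1, h2]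
      exact h
    · rw [Matrix.det_submatrix_equiv_self e.symm, hdet, hμget]
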